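/- The ring R₂ = F₂[h,k,s]/(h², k², s², hs, ks), the quotient of the polynomial ring in three variables over the field F₂ with two elements by the ideal generated by h², k², s², hs, and ks, is not self-injective: R₂ is not injective as a module over itself. -/

import Mathlib

/-!
STATEMENT 11: The ring `R₂ = F₂[h,k,s]/(h², k², s², hs, ks)` is not
self-injective, i.e. `R₂` is not injective as a module over itself.
Here `h = X 0`, `k = X 1`, `s = X 2`.
-/

open MvPolynomial

/-- The ideal `(h², k², s², hs, ks)` in `F₂[h,k,s]`. -/
noncomputable abbrev I₂ : Ideal (MvPolynomial (Fin 3) (ZMod 2)) :=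
  Ideal.span {X 0 ^ 2, X 1 ^ 2, X 2 ^ 2, X 0 * X 2, X 1 * X 2}

/-- The ring `R₂ = F₂[h,k,s]/(h², k², s², hs, ks)`. -/
abbrev R₂ : Type := MvPolynomial (Fin 3) (ZMod 2) ⧸ I₂

noncomputable def φ0 : MvPolynomial (Fin 3) (ZMod 2) →ₐ[ZMod 2] DualNumber (ZMod 2) :=
  aeval (fun i => if i = 0 then DualNumber.eps else 0)

noncomputable def φ2 : MvPolynomial (Fin 3) (ZMod 2) →ₐ[ZMod 2] DualNumber (ZMod 2) :=
  aeval (fun i => if i = 2 then DualNumber.eps else 0)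

lemma ker0 : I₂ ≤ RingHom.ker (φ0 : MvPolynomial (Fin 3) (ZMod 2) →+* DualNumber (ZMod 2)) := by
  rw [Ideal.span_le]
  intro q hq
  simp only [Set.mem_insert_iff, Set.mem_singleton_iff] at hq
  rcases hq with rfl | rfl | rfl | rfl | rfl <;>
    simp [RingHom.mem_ker, φ0, sq, DualNumber.eps_mul_eps]

lemma ker2 : I₂ ≤ RingHom.ker (φ2 : MvPolynomial (Fin 3) (ZMod 2) →+* DualNumber (ZMod 2)) := by
  rw [Ideal.span_le]
  intro q hq
  simp only [Set.mem_insert_iff, Set.mem_singleton_iff] at hq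
  rcases hq with rfl | rfl | rfl | rfl | rfl <;>
    simp [RingHom.mem_ker, φ2, sq, DualNumber.eps_mul_eps]

lemma L1 (p : MvPolynomial (Fin 3) (ZMod 2)) (hp : p * X 0 ∈ I₂) :
    constantCoeff p = 0 := by
  have h : φ0 (p * X 0) = 0 := ker0 hp
  rw [map_mul] at h
  have hX : φ0 (X 0) = DualNumber.eps := by simp [φ0]
  rw [hX] at h
  have h2 := congrArg TrivSqZeroExt.snd h
  rw [TrivSqZeroExt.snd_mul] at h2
  simp only [DualNumber.snd_eps, DualNumber.fst_eps, TrivSqZeroExt.snd_zero,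
    MulOpposite.op_zero, zero_smul, add_zero, smul_eq_mul, mul_one] at h2
  have hf : (φ0 p).fst = constantCoeff p := by
    have := comp_aeval_apply (TrivSqZeroExt.fstHom (ZMod 2) (ZMod 2) (ZMod 2))
      (f := fun i : Fin 3 => if i = 0 then DualNumber.eps else 0) p
    simp only [φ0] at *
    rw [show TrivSqZeroExt.fst ((aeval fun i : Fin 3 => if i = 0 then DualNumber.eps else 0) p)
      = (TrivSqZeroExt.fstHom (ZMod 2) (ZMod 2) (ZMod 2))
        ((aeval fun i : Fin 3 => if i = 0 then DualNumber.eps else 0) p) from rfl, this]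
    simp [apply_ite (TrivSqZeroExt.fstHom (ZMod 2) (ZMod 2) (ZMod 2))]
  rw [hf] at h2
  exact h2

lemma L2 (p : MvPolynomial (Fin 3) (ZMod 2)) (h0 : constantCoeff p = 0) :
    p * X 2 ∈ I₂ := by
  have hmem : p ∈ Ideal.span (MvPolynomial.X '' (Set.univ : Set (Fin 3)) :
      Set (MvPolynomial (Fin 3) (ZMod 2))) := by
    rw [mem_ideal_span_X_image]
    intro m hm
    rw [mem_support_iff] at hm
    by_contra hc
    push_neg at hc
    have hm0 : m = 0 := by
      ext i
      exact hc i (Set.mem_univ i)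
    rw [hm0] at hm
    exact hm h0
  have key : ∀ i : Fin 3, (X i : MvPolynomial (Fin 3) (ZMod 2)) * X 2 ∈ I₂ := by
    intro i
    fin_cases i
    · exact Ideal.subset_span (by simp)
    · exact Ideal.subset_span (by simp)
    · show (X 2 : MvPolynomial (Fin 3) (ZMod 2)) * X 2 ∈ I₂
      rw [← sq]; exact Ideal.subset_span (by simp)
  refine Submodule.span_induction ?_ ?_ ?_ ?_ hmem
  · rintro x ⟨i, -, rfl⟩
    exact key i
  · simp
  · intro x y _ _ hx hy
    rw [add_mul]; exact Ideal.add_mem _ hx hy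
  · intro r x _ hx
    rw [smul_eq_mul, mul_assoc]
    exact Ideal.mul_mem_left _ _ hx

lemma not_dvd : ¬ ∃ c : R₂, (Ideal.Quotient.mk I₂ (X 2) : R₂) = Ideal.Quotient.mk I₂ (X 0) * c := by
  rintro ⟨c, hc⟩
  obtain ⟨q, rfl⟩ := Ideal.Quotient.mk_surjective c
  rw [← map_mul, Ideal.Quotient.eq] at hc
  have h := ker2 hc
  rw [RingHom.mem_ker] at h
  have h' : φ2 (X 2) - φ2 (X 0) * φ2 q = 0 := by
    simpa [map_sub, map_mul] using h
  have hx2 : φ2 (X 2) = DualNumber.eps := by simp [φ2]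
  have hx0 : φ2 (X 0) = 0 := by simp [φ2]
  rw [hx0, hx2, zero_mul, sub_zero] at h'
  have := congrArg TrivSqZeroExt.snd h'
  simp only [DualNumber.snd_eps, TrivSqZeroExt.snd_zero] at this
  exact one_ne_zero this

set_option maxHeartbeats 1000000 in
set_option synthInstance.maxHeartbeats 1000000 in
theorem mod2_burnside_klein_not_selfInjective : ¬ Module.Injective R₂ R₂ := by
  intro hinj
  let μh : R₂ →ₗ[R₂] R₂ := LinearMap.toSpanSingleton R₂ R₂ (Ideal.Quotient.mk I₂ (X 0))
  let μs : R₂ →ₗ[R₂] R₂ := LinearMap.toSpanSingleton R₂ R₂ (Ideal.Quotient.mk I₂ (X 2))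
  have hle : LinearMap.ker μh ≤ LinearMap.ker μs := by
    intro x hx
    obtain ⟨p, rfl⟩ := Ideal.Quotient.mk_surjective x
    rw [LinearMap.mem_ker] at hx ⊢
    have hx' : p * X 0 ∈ I₂ := by
      rw [← Ideal.Quotient.eq_zero_iff_mem, map_mul]
      simpa [μh, LinearMap.toSpanSingleton_apply, smul_eq_mul] using hx
    have hmem : p * X 2 ∈ I₂ := L2 p (L1 p hx')
    show μs _ = 0
    rw [LinearMap.toSpanSingleton_apply, smul_eq_mul, ← map_mul,
      Ideal.Quotient.eq_zero_iff_mem]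
    exact hmem
  let i : (R₂ ⧸ LinearMap.ker μh) →ₗ[R₂] R₂ := Submodule.liftQ _ μh le_rfl
  let f : (R₂ ⧸ LinearMap.ker μh) →ₗ[R₂] R₂ := Submodule.liftQ _ μs hle
  have hi : Function.Injective i := by
    rw [← LinearMap.ker_eq_bot, Submodule.ker_liftQ_eq_bot _ _ _ le_rfl]
  obtain ⟨g, hg⟩ := hinj.out i hi f
  have key := hg (Submodule.Quotient.mk 1)
  simp only [i, f, Submodule.liftQ_apply, μh, μs, LinearMap.toSpanSingleton_apply,
    one_smul] at key
  apply not_dvd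
  refine ⟨g 1, ?_⟩
  calc (Ideal.Quotient.mk I₂ (X 2) : R₂)
      = g (Ideal.Quotient.mk I₂ (X 0)) := key.symm
    _ = g (Ideal.Quotient.mk I₂ (X 0) • (1 : R₂)) := by rw [smul_eq_mul, mul_one]
    _ = Ideal.Quotient.mk I₂ (X 0) • g 1 := map_smul g _ _
    _ = Ideal.Quotient.mk I₂ (X 0) * g 1 := smul_eq_mul _ _
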